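/- arXiv:1205.2449 — 5 statements merged into one kernel-verified Lean document; each statement's English description precedes it below -/
import Mathlib

section
/- Let H be a real Hilbert space, let A : H →L[ℝ] H be a bounded self-adjoint linear operator with ⟨A x, x⟩ ≤ 0 for all x ∈ H, let τ > 0 and σ ≥ 1/2. If u, u' ∈ H satisfy the weighted-scheme relation u' - σ·τ·(A u') = u + (1-σ)·τ·(A u), then ‖u'‖ ≤ ‖u‖. Consequently any sequence (u^n) of iterates of the scheme satisfies ‖u^{n+1}‖ ≤ ‖u^n‖ ≤ ‖u^0‖ for all n. -/
open scoped RealInnerProductSpace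

lemma weighted_scheme_step
    {H : Type*} [NormedAddCommGroup H] [InnerProductSpace ℝ H]
    (A : H →L[ℝ] H)
    (hsa : ∀ x y : H, ⟪A x, y⟫ = ⟪x, A y⟫)
    (hnonpos : ∀ x : H, ⟪A x, x⟫ ≤ 0)
    (τ : ℝ) (hτ : 0 < τ) (σ : ℝ) (hσ : (1 : ℝ) / 2 ≤ σ)
    (u u' : H) (h : u' - (σ * τ) • A u' = u + ((1 - σ) * τ) • A u) :
    ‖u'‖ ≤ ‖u‖ := by
  set w : H := σ • u' + (1 - σ) • u with hw
  have hAw : A w = σ • A u' + (1 - σ) • A u := by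
    simp [hw, map_add, map_smul]
  have h1 : u' - u = τ • A w := by
    rw [hAw]
    linear_combination (norm := module) h
  have h2 : u' + u = (2 : ℝ) • w + ((1 - 2 * σ) * τ) • A w := by
    have : ((1 - 2 * σ) * τ) • A w = (1 - 2 * σ) • (τ • A w) := by
      rw [smul_smul]
    rw [this, ← h1, hw]
    module
  have hid : ‖u'‖ ^ 2 - ‖u‖ ^ 2 = ⟪u' + u, u' - u⟫ := by
    simp only [inner_add_left, inner_sub_right, real_inner_self_eq_norm_sq,
      real_inner_comm u u']
    ring
  have hexp : ⟪u' + u, u' - u⟫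
      = 2 * τ * ⟪A w, w⟫ + ((1 - 2 * σ) * τ * τ) * ⟪A w, A w⟫ := by
    rw [h1, h2]
    simp only [inner_add_left, real_inner_smul_left, real_inner_smul_right,
      real_inner_comm w (A w)]
    ring
  have hAww : ⟪A w, w⟫ ≤ 0 := hnonpos w
  have hAwAw : (0 : ℝ) ≤ ⟪A w, A w⟫ := real_inner_self_nonneg
  have hc : (1 - 2 * σ) * τ * τ ≤ 0 := by nlinarith [mul_pos hτ hτ]
  have hsq : ‖u'‖ ^ 2 ≤ ‖u‖ ^ 2 := by
    nlinarith [mul_nonpos_of_nonpos_of_nonneg hc hAwAw,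
      mul_nonneg hτ.le (neg_nonneg.mpr hAww)]
  exact (pow_le_pow_iff_left₀ (norm_nonneg _) (norm_nonneg _) two_ne_zero).mp hsq

/-- Absolute stability of the weighted scheme: if `A` is bounded, self-adjoint and
nonpositive on a real Hilbert space, `τ > 0` and `σ ≥ 1/2`, then any one step
`u' - στ A u' = u + (1-σ)τ A u` of the scheme satisfies `‖u'‖ ≤ ‖u‖`, and hence any
sequence of iterates is nonincreasing in norm, with `‖uⁿ‖ ≤ ‖u⁰‖`. -/
theorem weighted_scheme_absolute_stability
    {H : Type*} [NormedAddCommGroup H] [InnerProductSpace ℝ H] [CompleteSpace H]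
    (A : H →L[ℝ] H)
    (hsa : ∀ x y : H, ⟪A x, y⟫ = ⟪x, A y⟫)
    (hnonpos : ∀ x : H, ⟪A x, x⟫ ≤ 0)
    (τ : ℝ) (hτ : 0 < τ) (σ : ℝ) (hσ : (1 : ℝ) / 2 ≤ σ) :
    (∀ u u' : H,
        u' - (σ * τ) • A u' = u + ((1 - σ) * τ) • A u → ‖u'‖ ≤ ‖u‖) ∧
      ∀ u : ℕ → H,
        (∀ n : ℕ, u (n + 1) - (σ * τ) • A (u (n + 1))
            = u n + ((1 - σ) * τ) • A (u n)) →
        ∀ n : ℕ, ‖u (n + 1)‖ ≤ ‖u n‖ ∧ ‖u n‖ ≤ ‖u 0‖ := by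
  constructor
  · intro u u' h
    exact weighted_scheme_step A hsa hnonpos τ hτ σ hσ u u' h
  · intro u hu n
    have step : ∀ m, ‖u (m + 1)‖ ≤ ‖u m‖ := fun m =>
      weighted_scheme_step A hsa hnonpos τ hτ σ hσ (u m) (u (m + 1)) (hu m)
    refine ⟨step n, ?_⟩
    induction n with
    | zero => exact le_refl _
    | succ k ih => exact le_trans (step k) ih
end

section
/- Let H be a real Hilbert space and let A : H →L[ℝ] H be a bounded self-adjoint linear operator with ⟨A x, x⟩ ≤ 0 for all x ∈ H. Then for every t ≥ 0 the operator exponential exp(t·A) is a contraction: ‖exp(t·A) x‖ ≤ ‖x‖ for all x ∈ H. -/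
open scoped RealInnerProductSpace

/-- Contraction property of the semigroup generated by a bounded self-adjoint
nonpositive operator `A` on a real Hilbert space: for every `t ≥ 0`,
`‖exp(tA) x‖ ≤ ‖x‖` for all `x`. -/
theorem exp_nonpos_selfAdjoint_contraction
    {H : Type*} [NormedAddCommGroup H] [InnerProductSpace ℝ H] [CompleteSpace H]
    (A : H →L[ℝ] H)
    (hsa : ∀ x y : H, ⟪A x, y⟫ = ⟪x, A y⟫)
    (hnonpos : ∀ x : H, ⟪A x, x⟫ ≤ 0) :
    ∀ t : ℝ, 0 ≤ t → ∀ x : H, ‖(NormedSpace.exp (t • A)) x‖ ≤ ‖x‖ := by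
  intro t ht x
  set g : ℝ → H := fun s => (NormedSpace.exp (s • A)) x with hgdef
  have hgd : ∀ s : ℝ, HasDerivAt g (A (g s)) s := by
    intro s
    have h1 : HasDerivAt (fun u : ℝ => NormedSpace.exp (u • A))
        (A * NormedSpace.exp (s • A)) s := hasDerivAt_exp_smul_const' A s
    simpa [hgdef] using h1.clm_apply (hasDerivAt_const s x)
  set f : ℝ → ℝ := fun s => ⟪g s, g s⟫ with hfdef
  have hfd : ∀ s : ℝ, HasDerivAt f (2 * ⟪A (g s), g s⟫) s := by
    intro s
    have h2 : HasDerivAt f (⟪g s, A (g s)⟫ + ⟪A (g s), g s⟫) s := HasDerivAt.inner ℝ (hgd s) (hgd s)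
    convert h2 using 1
    rw [real_inner_comm (g s) (A (g s))]; ring
  have hdiff : Differentiable ℝ f := fun s => (hfd s).differentiableAt
  have hmono : Antitone f := by
    apply antitone_of_deriv_nonpos hdiff
    intro s
    rw [(hfd s).deriv]
    have := hnonpos (g s)
    linarith
  have hft : f t ≤ f 0 := hmono ht
  have h0 : g 0 = x := by
    simp [hgdef, NormedSpace.exp_zero]
  have hsq : ‖g t‖ ^ 2 ≤ ‖x‖ ^ 2 := by
    have e1 : f t = ‖g t‖ ^ 2 := real_inner_self_eq_norm_sq (g t)
    have e2 : f 0 = ‖x‖ ^ 2 := by rw [hfdef]; simp only [h0]; exact real_inner_self_eq_norm_sq x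
    rw [e1, e2] at hft; exact hft
  nlinarith [norm_nonneg (g t), norm_nonneg x, hsq]
end

section
/- Let X be a real Banach space, A, B : X →L[ℝ] X bounded linear operators, c₀ ∈ X, and let c(t) = exp(t·(A+B)) c₀ be the exact solution of c' = (A+B)c, c(0) = c₀. Let c_prev : ℝ → X be continuous and define the splitting iterate c_next(t) = exp(t·A) c₀ + ∫₀ᵗ exp((t-s)·A) (B (c_prev s)) ds. Then for all t ≥ 0 the error satisfies the integral identity c_next(t) - c(t) = ∫₀ᵗ exp((t-s)·A) (B (c_prev(s) - c(s))) ds. -/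
open NormedSpace intervalIntegral

set_option maxHeartbeats 1000000
set_option synthInstance.maxHeartbeats 400000

/-- Error recursion of the iterative splitting method: with the exact solution
`c(t) = exp(t(A+B)) c₀` and splitting iterate
`c_next(t) = exp(tA) c₀ + ∫₀ᵗ exp((t-s)A) B c_prev(s) ds`, one has
`c_next(t) - c(t) = ∫₀ᵗ exp((t-s)A) B (c_prev(s) - c(s)) ds` for all `t ≥ 0`. -/
theorem iterative_splitting_error_integral_identity
    {X : Type*} [NormedAddCommGroup X] [NormedSpace ℝ X] [CompleteSpace X]
    (A B : X →L[ℝ] X) (c₀ : X) (c_prev : ℝ → X) (hc_prev : Continuous c_prev) :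
    let c : ℝ → X := fun t => NormedSpace.exp (t • (A + B)) c₀
    let c_next : ℝ → X := fun t =>
      NormedSpace.exp (t • A) c₀ +
        ∫ s in (0 : ℝ)..t, NormedSpace.exp ((t - s) • A) (B (c_prev s))
    ∀ t : ℝ, 0 ≤ t →
      c_next t - c t = ∫ s in (0 : ℝ)..t, NormedSpace.exp ((t - s) • A) (B (c_prev s - c s)) := by
  intro c c_next t _ht
  let +nondep : NormedAlgebra ℚ (X →L[ℝ] X) := .restrictScalars ℚ ℝ (X →L[ℝ] X)
  have hc : Continuous c := by
    have : Continuous fun s : ℝ => NormedSpace.exp (s • (A + B)) :=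
      exp_continuous.comp (by continuity)
    exact this.clm_apply continuous_const
  -- continuity of the kernel
  have hker : ∀ (f : ℝ → X), Continuous f →
      Continuous fun s => NormedSpace.exp ((t - s) • A) (B (f s)) := by
    intro f hf
    exact (exp_continuous.comp (by continuity)).clm_apply (B.continuous.comp hf)
  -- Duhamel: exp(t(A+B)) c₀ - exp(tA) c₀ = ∫₀ᵗ exp((t-s)A) (B (c s)) ds
  have duhamel : (∫ s in (0:ℝ)..t, NormedSpace.exp ((t - s) • A) (B (c s)))
      = c t - NormedSpace.exp (t • A) c₀ := by
    have key : ∀ s : ℝ, HasDerivAt (fun u => NormedSpace.exp ((t - u) • A) (c u))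
        (NormedSpace.exp ((t - s) • A) (B (c s))) s := by
      intro s
      have hE : HasDerivAt (fun u : ℝ => NormedSpace.exp ((t - u) • A))
          ((-1 : ℝ) • (NormedSpace.exp ((t - s) • A) * A)) s := by
        have h1 : HasDerivAt (fun u : ℝ => t - u) (-1 : ℝ) s := by
          simpa using (hasDerivAt_id s).const_sub t
        exact (hasDerivAt_exp_smul_const (𝕂 := ℝ) A (t - s)).scomp s h1
      have hv : HasDerivAt c
          ((NormedSpace.exp (s • (A + B)) * (A + B)) c₀) s := by
        have h := (hasDerivAt_exp_smul_const (𝕂 := ℝ) (A + B) s).clm_apply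
          (hasDerivAt_const s c₀)
        simpa only [map_zero, add_zero] using h
      have hD := hE.clm_apply hv
      have hcomm : NormedSpace.exp (s • (A + B)) * (A + B)
          = (A + B) * NormedSpace.exp (s • (A + B)) :=
        (((Commute.refl (A + B)).smul_right s).exp_right).symm.eq
      have heq : ((-1 : ℝ) • (NormedSpace.exp ((t - s) • A) * A)) (c s)
            + NormedSpace.exp ((t - s) • A)
              ((NormedSpace.exp (s • (A + B)) * (A + B)) c₀)
          = NormedSpace.exp ((t - s) • A) (B (c s)) := by
        rw [hcomm]
        rw [ContinuousLinearMap.smul_apply, ContinuousLinearMap.mul_apply,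
          ContinuousLinearMap.mul_apply, neg_one_smul]
        have hcs : NormedSpace.exp (s • (A + B)) c₀ = c s := rfl
        rw [hcs, ← map_neg, ← map_add]
        congr 1
        rw [ContinuousLinearMap.add_apply]
        abel
      exact heq ▸ hD
    have hint : IntervalIntegrable (fun s => NormedSpace.exp ((t - s) • A) (B (c s)))
        MeasureTheory.volume 0 t := (hker c hc).intervalIntegrable 0 t
    have hfin := intervalIntegral.integral_eq_sub_of_hasDerivAt
      (f := fun u => NormedSpace.exp ((t - u) • A) (c u))
      (fun s _ => key s) hint
    rw [hfin]
    have h0 : c 0 = c₀ := by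
      show NormedSpace.exp ((0:ℝ) • (A + B)) c₀ = c₀
      rw [zero_smul, NormedSpace.exp_zero]; rfl
    show NormedSpace.exp ((t - t) • A) (c t) - NormedSpace.exp ((t - 0) • A) (c 0)
        = c t - NormedSpace.exp (t • A) c₀
    rw [sub_self, zero_smul, NormedSpace.exp_zero, sub_zero, h0]
    rfl
  have h1 : IntervalIntegrable (fun s => NormedSpace.exp ((t - s) • A) (B (c_prev s)))
      MeasureTheory.volume 0 t := (hker c_prev hc_prev).intervalIntegrable 0 t
  have h2 : IntervalIntegrable (fun s => NormedSpace.exp ((t - s) • A) (B (c s)))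
      MeasureTheory.volume 0 t := (hker c hc).intervalIntegrable 0 t
  have hsplit : (∫ s in (0:ℝ)..t, NormedSpace.exp ((t - s) • A) (B (c_prev s - c s)))
      = (∫ s in (0:ℝ)..t, NormedSpace.exp ((t - s) • A) (B (c_prev s)))
        - ∫ s in (0:ℝ)..t, NormedSpace.exp ((t - s) • A) (B (c s)) := by
    rw [← intervalIntegral.integral_sub h1 h2]
    congr 1; ext s; rw [map_sub, map_sub]
  rw [hsplit, duhamel]
  show NormedSpace.exp (t • A) c₀
      + (∫ s in (0:ℝ)..t, NormedSpace.exp ((t - s) • A) (B (c_prev s))) - c t = _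
  abel
end

section
/- Let X be a real Banach space, A, B : X →L[ℝ] X bounded linear operators, c₀ ∈ X, τ > 0, and let c(t) = exp(t·(A+B)) c₀. Let c_prev : ℝ → X be continuous and define c_next(t) = exp(t·A) c₀ + ∫₀ᵗ exp((t-s)·A) (B (c_prev s)) ds. Then sup over t ∈ [0, τ] of ‖c_next(t) - c(t)‖ is at most τ · ‖B‖ · exp(τ·‖A‖) · (sup over s ∈ [0, τ] of ‖c_prev(s) - c(s)‖). -/
open NormedSpace intervalIntegral Set

set_option linter.unusedSectionVars false

section Aux

variable {X : Type*} [NormedAddCommGroup X] [NormedSpace ℝ X] [CompleteSpace X]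

lemma clm_norm_exp_le (M : X →L[ℝ] X) :
    ‖NormedSpace.exp M‖ ≤ Real.exp ‖M‖ := by
  rw [NormedSpace.exp_eq_tsum ℝ]
  have hpow : ∀ n : ℕ, ‖M ^ n‖ ≤ ‖M‖ ^ n := by
    intro n
    cases n with
    | zero => simpa [ContinuousLinearMap.one_def] using
        ContinuousLinearMap.norm_id_le (𝕜 := ℝ) (E := X)
    | succ n => exact norm_pow_le' M n.succ_pos
  have hb : ∀ n : ℕ, ‖((n.factorial : ℝ))⁻¹ • M ^ n‖ ≤ ‖M‖ ^ n / (n.factorial : ℝ) := by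
    intro n
    refine (_root_.norm_smul_le ((n.factorial : ℝ))⁻¹ (M ^ n)).trans ?_
    rw [norm_inv, Real.norm_natCast, div_eq_inv_mul]
    exact mul_le_mul_of_nonneg_left (hpow n) (by positivity)
  have hs : Summable (fun n : ℕ => ‖M‖ ^ n / (n.factorial : ℝ)) :=
    Real.summable_pow_div_factorial _
  have := tsum_of_norm_bounded hs.hasSum hb
  refine this.trans ?_
  rw [Real.exp_eq_exp_ℝ, NormedSpace.exp_eq_tsum_div]

lemma clm_exp_continuous : Continuous (NormedSpace.exp : (X →L[ℝ] X) → (X →L[ℝ] X)) :=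
  continuous_iff_continuousAt.2 fun x => (NormedSpace.exp_analytic (𝕂 := ℝ) x).continuousAt

lemma exp_voc (A B : X →L[ℝ] X) (c₀ : X) (t : ℝ) :
    NormedSpace.exp (t • (A + B)) c₀ =
      NormedSpace.exp (t • A) c₀ +
        ∫ s in (0 : ℝ)..t,
          NormedSpace.exp ((t - s) • A) (B (NormedSpace.exp (s • (A + B)) c₀)) := by
  have key : ∀ s : ℝ,
      HasDerivAt (fun s => NormedSpace.exp ((t - s) • A)
          (NormedSpace.exp (s • (A + B)) c₀))
        (NormedSpace.exp ((t - s) • A) (B (NormedSpace.exp (s • (A + B)) c₀))) s := by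
    intro s
    have hts : HasDerivAt (fun s : ℝ => t - s) (-1) s := (hasDerivAt_id s).const_sub t
    have h₁ : HasDerivAt (fun s : ℝ => NormedSpace.exp ((t - s) • A))
        ((-1 : ℝ) • (NormedSpace.exp ((t - s) • A) * A)) s :=
      (hasDerivAt_exp_smul_const (𝕂 := ℝ) A (t - s)).scomp s hts
    have h₂ : HasDerivAt (fun s : ℝ => NormedSpace.exp (s • (A + B)) c₀)
        (((A + B) * NormedSpace.exp (s • (A + B))) c₀ +
            NormedSpace.exp (s • (A + B)) 0) s :=
      (hasDerivAt_exp_smul_const' (𝕂 := ℝ) (A + B) s).clm_apply (hasDerivAt_const s c₀)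
    have := h₁.clm_apply h₂
    convert this using 1
    set y := NormedSpace.exp (s • (A + B)) c₀ with hy
    simp only [ContinuousLinearMap.mul_apply, map_zero, add_zero, neg_smul, one_smul,
      ContinuousLinearMap.neg_apply, ContinuousLinearMap.add_apply, map_add]
    abel
  have hcont : Continuous (fun s : ℝ =>
      NormedSpace.exp ((t - s) • A) (B (NormedSpace.exp (s • (A + B)) c₀))) := by
    apply Continuous.clm_apply
    · exact clm_exp_continuous.comp ((continuous_const.sub continuous_id).smul
        continuous_const)
    · exact B.continuous.comp (Continuous.clm_apply
        (clm_exp_continuous.comp (continuous_id.smul continuous_const)) continuous_const)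
  have hint := intervalIntegral.integral_eq_sub_of_hasDerivAt
    (fun s _ => key s) (hcont.intervalIntegrable 0 t)
  rw [hint]
  simp [NormedSpace.exp_zero]

end Aux

/-- One-step error contraction of the iterative splitting method: with
`c(t) = exp(t(A+B)) c₀` and `c_next(t) = exp(tA) c₀ + ∫₀ᵗ exp((t-s)A) B c_prev(s) ds`,
the sup over `[0, τ]` of `‖c_next - c‖` is at most
`τ ‖B‖ exp(τ‖A‖)` times the sup over `[0, τ]` of `‖c_prev - c‖`. -/
theorem iterative_splitting_one_step_error_bound
    {X : Type*} [NormedAddCommGroup X] [NormedSpace ℝ X] [CompleteSpace X]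
    (A B : X →L[ℝ] X) (c₀ : X) (τ : ℝ) (hτ : 0 < τ)
    (c_prev : ℝ → X) (hc_prev : Continuous c_prev) :
    let c : ℝ → X := fun t => NormedSpace.exp (t • (A + B)) c₀
    let c_next : ℝ → X := fun t =>
      NormedSpace.exp (t • A) c₀ +
        ∫ s in (0 : ℝ)..t, NormedSpace.exp ((t - s) • A) (B (c_prev s))
    sSup ((fun t => ‖c_next t - c t‖) '' Set.Icc (0 : ℝ) τ) ≤
      τ * ‖B‖ * Real.exp (τ * ‖A‖) *
        sSup ((fun s => ‖c_prev s - c s‖) '' Set.Icc (0 : ℝ) τ) := by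
  intro c c_next
  have hcont_c : Continuous c :=
    Continuous.clm_apply (clm_exp_continuous.comp
      (continuous_id.smul continuous_const)) continuous_const
  have hd : Continuous fun s => ‖c_prev s - c s‖ := (hc_prev.sub hcont_c).norm
  set M := sSup ((fun s => ‖c_prev s - c s‖) '' Set.Icc (0 : ℝ) τ) with hM
  have hne : (Set.Icc (0 : ℝ) τ).Nonempty := ⟨0, by simp [hτ.le]⟩
  have hbdd : BddAbove ((fun s => ‖c_prev s - c s‖) '' Set.Icc (0 : ℝ) τ) :=
    (isCompact_Icc.image hd).bddAbove
  have hMle : ∀ s ∈ Set.Icc (0 : ℝ) τ, ‖c_prev s - c s‖ ≤ M := fun s hs =>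
    le_csSup hbdd ⟨s, hs, rfl⟩
  have hM0 : 0 ≤ M := (norm_nonneg _).trans (hMle 0 ⟨le_rfl, hτ.le⟩)
  refine csSup_le (hne.image _) ?_
  rintro y ⟨t, ht, rfl⟩
  obtain ⟨ht0, htτ⟩ := ht
  -- express the difference as an integral
  have hvoc := exp_voc A B c₀ t
  have hint_p : IntervalIntegrable
      (fun s => NormedSpace.exp ((t - s) • A) (B (c_prev s))) MeasureTheory.volume 0 t := by
    refine Continuous.intervalIntegrable ?_ 0 t
    exact Continuous.clm_apply (clm_exp_continuous.comp
      ((continuous_const.sub continuous_id).smul continuous_const))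
      (B.continuous.comp hc_prev)
  have hint_c : IntervalIntegrable
      (fun s => NormedSpace.exp ((t - s) • A) (B (c s))) MeasureTheory.volume 0 t := by
    refine Continuous.intervalIntegrable ?_ 0 t
    exact Continuous.clm_apply (clm_exp_continuous.comp
      ((continuous_const.sub continuous_id).smul continuous_const))
      (B.continuous.comp hcont_c)
  have hkey : c_next t - c t =
      ∫ s in (0 : ℝ)..t, NormedSpace.exp ((t - s) • A) (B (c_prev s - c s)) := by
    have : c t = NormedSpace.exp (t • A) c₀ +
        ∫ s in (0 : ℝ)..t, NormedSpace.exp ((t - s) • A) (B (c s)) := hvoc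
    rw [show c_next t = NormedSpace.exp (t • A) c₀ +
        ∫ s in (0 : ℝ)..t, NormedSpace.exp ((t - s) • A) (B (c_prev s)) from rfl, this,
      add_sub_add_left_eq_sub, ← intervalIntegral.integral_sub hint_p hint_c]
    simp [map_sub]
  show ‖c_next t - c t‖ ≤ _
  rw [hkey]
  have hC : ∀ s ∈ Set.uIoc (0 : ℝ) t,
      ‖NormedSpace.exp ((t - s) • A) (B (c_prev s - c s))‖ ≤
        ‖B‖ * Real.exp (τ * ‖A‖) * M := by
    intro s hs
    rw [Set.uIoc_of_le ht0] at hs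
    obtain ⟨hs0, hst⟩ := hs
    have hsτ : s ∈ Set.Icc (0 : ℝ) τ := ⟨hs0.le, hst.trans htτ⟩
    have h1 : ‖NormedSpace.exp ((t - s) • A)‖ ≤ Real.exp (τ * ‖A‖) := by
      refine (clm_norm_exp_le _).trans (Real.exp_le_exp.2 ?_)
      refine (_root_.norm_smul_le (t - s) A).trans ?_
      rw [Real.norm_eq_abs, abs_of_nonneg (by linarith : (0:ℝ) ≤ t - s)]
      have : t - s ≤ τ := by linarith
      exact mul_le_mul_of_nonneg_right this (norm_nonneg A)
    calc ‖NormedSpace.exp ((t - s) • A) (B (c_prev s - c s))‖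
        ≤ ‖NormedSpace.exp ((t - s) • A)‖ * ‖B (c_prev s - c s)‖ :=
          ContinuousLinearMap.le_opNorm _ _
      _ ≤ ‖NormedSpace.exp ((t - s) • A)‖ * (‖B‖ * ‖c_prev s - c s‖) := by
          exact mul_le_mul_of_nonneg_left (B.le_opNorm _) (norm_nonneg _)
      _ ≤ Real.exp (τ * ‖A‖) * (‖B‖ * M) := by
          refine mul_le_mul h1 (mul_le_mul_of_nonneg_left (hMle s hsτ) (norm_nonneg B)) ?_ ?_
          · positivity
          · positivity
      _ = ‖B‖ * Real.exp (τ * ‖A‖) * M := by ring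
  have := intervalIntegral.norm_integral_le_of_norm_le_const hC
  rw [sub_zero, abs_of_nonneg ht0] at this
  refine this.trans ?_
  have h2 : ‖B‖ * Real.exp (τ * ‖A‖) * M * t ≤ ‖B‖ * Real.exp (τ * ‖A‖) * M * τ :=
    mul_le_mul_of_nonneg_left htτ (by positivity)
  linarith [h2]
end

section
/- Let X be a real Banach space, let A₁, A₂ : X →L[ℝ] X be bounded linear operators, let Q ∈ X and C₀ ∈ X. Then the function C(t) = exp(t·(A₁+A₂)) C₀ + ∫₀ᵗ exp((t-s)·(A₁+A₂)) Q ds is the unique continuous fixed point on [0, τ] (for any τ > 0 with τ·‖A₂‖·exp(τ‖A₁‖) < 1) of the map Φ given by (Φ v)(t) = exp(t·A₁) C₀ + ∫₀ᵗ exp((t-s)·A₁) (A₂ (v s) + Q) ds; equivalently, the limit of the fixed-point splitting iteration is the exact solution of ∂_t C = (A₁+A₂) C + Q with C(0) = C₀. -/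
open NormedSpace intervalIntegral Set

set_option linter.unusedSectionVars false
set_option maxHeartbeats 1000000
set_option synthInstance.maxHeartbeats 400000

section Aux
variable {X : Type*} [NormedAddCommGroup X] [NormedSpace ℝ X] [CompleteSpace X]

lemma auxSplit_cont_apply {f : ℝ → X →L[ℝ] X} {g : ℝ → X} (hf : Continuous f)
    (hg : Continuous g) : Continuous fun t => f t (g t) :=
  isBoundedBilinearMap_apply.continuous.comp (hf.prodMk hg)

lemma auxSplit_cont_exp (B : X →L[ℝ] X) : Continuous fun t : ℝ => exp (t • B) :=
  continuous_iff_continuousAt.2 fun t => (hasDerivAt_exp_smul_const' (𝕂 := ℝ) B t).continuousAt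

lemma auxSplit_norm_exp_le (B : X →L[ℝ] X) : ‖exp B‖ ≤ Real.exp ‖B‖ := by
  rw [exp_eq_tsum ℝ]
  refine (norm_tsum_le_tsum_norm (norm_expSeries_summable' B)).trans ?_
  rw [Real.exp_eq_exp_ℝ, exp_eq_tsum ℝ]
  refine Summable.tsum_le_tsum (fun n => ?_) (norm_expSeries_summable' B) (expSeries_summable' ‖B‖)
  rw [norm_smul, smul_eq_mul, norm_inv, Real.norm_natCast]
  gcongr
  cases n with
  | zero => rw [pow_zero, pow_zero]; exact ContinuousLinearMap.norm_id_le
  | succ n => exact norm_pow_le' B n.succ_pos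

noncomputable def auxSplit_D (B : X →L[ℝ] X) (Q C₀ : X) : ℝ → X :=
  fun t => exp (t • B) C₀ + ∫ s in (0:ℝ)..t, exp (s • B) Q

lemma auxSplit_C_eq_D (B : X →L[ℝ] X) (Q C₀ : X) (t : ℝ) :
    exp (t • B) C₀ + (∫ s in (0:ℝ)..t, exp ((t - s) • B) Q) = auxSplit_D B Q C₀ t := by
  unfold auxSplit_D
  congr 1
  simpa using intervalIntegral.integral_comp_sub_left (a := (0:ℝ)) (b := t)
    (fun u => exp (u • B) Q) t

lemma auxSplit_hasDerivAt_exp_apply (B : X →L[ℝ] X) (v : X) (t : ℝ) :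
    HasDerivAt (fun u : ℝ => exp (u • B) v) (B (exp (t • B) v)) t := by
  have := (hasDerivAt_exp_smul_const' (𝕂 := ℝ) B t).clm_apply (hasDerivAt_const t v)
  simpa [ContinuousLinearMap.mul_apply] using this

lemma auxSplit_hasDerivAt_D (B : X →L[ℝ] X) (Q C₀ : X) (t : ℝ) :
    HasDerivAt (auxSplit_D B Q C₀) (B (auxSplit_D B Q C₀ t) + Q) t := by
  have hc : Continuous fun s : ℝ => exp (s • B) Q :=
    auxSplit_cont_apply (auxSplit_cont_exp B) continuous_const
  have h1 := auxSplit_hasDerivAt_exp_apply B C₀ t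
  have h2 : HasDerivAt (fun u : ℝ => ∫ s in (0:ℝ)..u, exp (s • B) Q) (exp (t • B) Q) t :=
    intervalIntegral.integral_hasDerivAt_right (hc.intervalIntegrable 0 t)
      (hc.stronglyMeasurableAtFilter _ _) hc.continuousAt
  have h3 := h1.add h2
  have key : B (auxSplit_D B Q C₀ t) + Q = B (exp (t • B) C₀) + exp (t • B) Q := by
    have hint : (∫ s in (0:ℝ)..t, B (exp (s • B) Q))
        = exp (t • B) Q - exp ((0:ℝ) • B) Q :=
      intervalIntegral.integral_eq_sub_of_hasDerivAt
        (fun s _ => auxSplit_hasDerivAt_exp_apply B Q s)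
        ((B.continuous.comp hc).intervalIntegrable 0 t)
    unfold auxSplit_D
    rw [map_add, ← B.intervalIntegral_comp_comm (hc.intervalIntegrable 0 t), hint]
    simp [exp_zero]
    abel
  rw [key]
  exact h3

lemma auxSplit_cont_D (B : X →L[ℝ] X) (Q C₀ : X) : Continuous (auxSplit_D B Q C₀) :=
  continuous_iff_continuousAt.2 fun t => (auxSplit_hasDerivAt_D B Q C₀ t).continuousAt

end Aux

section Aux2
variable {X : Type*} [NormedAddCommGroup X] [NormedSpace ℝ X] [CompleteSpace X]

lemma auxSplit_phi_fixed (A₁ A₂ : X →L[ℝ] X) (Q C₀ : X) (t : ℝ) :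
    exp (t • A₁) C₀ +
      (∫ s in (0:ℝ)..t, exp ((t - s) • A₁) (A₂ (auxSplit_D (A₁ + A₂) Q C₀ s) + Q))
      = auxSplit_D (A₁ + A₂) Q C₀ t := by
  set D := auxSplit_D (A₁ + A₂) Q C₀ with hD
  have hcontD : Continuous D := auxSplit_cont_D _ _ _
  have hder : ∀ s : ℝ, HasDerivAt (fun s => exp ((t - s) • A₁) (D s))
      (exp ((t - s) • A₁) (A₂ (D s) + Q)) s := by
    intro s
    have hM : HasDerivAt (fun s : ℝ => exp ((t - s) • A₁))
        ((-1 : ℝ) • (A₁ * exp ((t - s) • A₁))) s := by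
      have hin : HasDerivAt (fun s : ℝ => t - s) (-1 : ℝ) s := by
        simpa using (hasDerivAt_id s).const_sub t
      exact (hasDerivAt_exp_smul_const' (𝕂 := ℝ) A₁ (t - s)).scomp s hin
    have h := hM.clm_apply (auxSplit_hasDerivAt_D (A₁ + A₂) Q C₀ s)
    have hcomm : A₁ * exp ((t - s) • A₁) = exp ((t - s) • A₁) * A₁ :=
      (((Commute.refl A₁).smul_right (t - s)).exp_right)
    have heq : ((-1 : ℝ) • (A₁ * exp ((t - s) • A₁))) (D s)
        + exp ((t - s) • A₁) ((A₁ + A₂) (D s) + Q)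
        = exp ((t - s) • A₁) (A₂ (D s) + Q) := by
      rw [hcomm]
      simp only [ContinuousLinearMap.smul_apply, ContinuousLinearMap.mul_apply,
        ContinuousLinearMap.add_apply, ContinuousLinearMap.neg_apply, map_add, neg_smul,
        one_smul, neg_one_smul]
      abel
    rw [heq] at h
    exact h
  have hce : Continuous fun s : ℝ => exp ((t - s) • A₁) :=
    (auxSplit_cont_exp A₁).comp (continuous_const.sub continuous_id)
  have hci : Continuous fun s : ℝ => exp ((t - s) • A₁) (A₂ (D s) + Q) :=
    auxSplit_cont_apply hce ((A₂.continuous.comp hcontD).add continuous_const)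
  have hint := intervalIntegral.integral_eq_sub_of_hasDerivAt
    (f := fun s => exp ((t - s) • A₁) (D s)) (f' := fun s => exp ((t - s) • A₁) (A₂ (D s) + Q))
    (fun s _ => hder s) (hci.intervalIntegrable 0 t)
  rw [hint]
  have hD0 : D 0 = C₀ := by simp [hD, auxSplit_D, exp_zero]
  simp only [hD0, sub_self, sub_zero, zero_smul, exp_zero, ContinuousLinearMap.one_apply]
  abel
end Aux2



/-- The exact Duhamel solution `C(t) = exp(t(A₁+A₂)) C₀ + ∫₀ᵗ exp((t-s)(A₁+A₂)) Q ds`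
of `∂ₜC = (A₁+A₂)C + Q`, `C(0) = C₀` is the unique continuous fixed point on `[0, τ]`
(for any `τ > 0` with `τ‖A₂‖ exp(τ‖A₁‖) < 1`) of the splitting fixed-point map
`Φ v (t) = exp(tA₁) C₀ + ∫₀ᵗ exp((t-s)A₁) (A₂ v(s) + Q) ds`. -/
theorem splitting_fixed_point_is_exact_solution
    {X : Type*} [NormedAddCommGroup X] [NormedSpace ℝ X] [CompleteSpace X]
    (A₁ A₂ : X →L[ℝ] X) (Q C₀ : X)
    (Φ : (ℝ → X) → (ℝ → X))
    (hΦ : ∀ v : ℝ → X, ∀ t : ℝ, Φ v t =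
      NormedSpace.exp (t • A₁) C₀ +
        ∫ s in (0 : ℝ)..t, NormedSpace.exp ((t - s) • A₁) (A₂ (v s) + Q)) :
    let C : ℝ → X := fun t =>
      NormedSpace.exp (t • (A₁ + A₂)) C₀ +
        ∫ s in (0 : ℝ)..t, NormedSpace.exp ((t - s) • (A₁ + A₂)) Q
    ∀ τ : ℝ, 0 < τ → τ * ‖A₂‖ * Real.exp (τ * ‖A₁‖) < 1 →
      (∀ t ∈ Set.Icc (0 : ℝ) τ, Φ C t = C t) ∧
        ∀ g : ℝ → X, Continuous g → (∀ t ∈ Set.Icc (0 : ℝ) τ, Φ g t = g t) →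
          ∀ t ∈ Set.Icc (0 : ℝ) τ, g t = C t := by
  intro C τ hτ hk
  set D := auxSplit_D (A₁ + A₂) Q C₀ with hDdef
  have hCD : C = D := funext fun t => auxSplit_C_eq_D (A₁ + A₂) Q C₀ t
  have hcontD : Continuous D := auxSplit_cont_D _ _ _
  have hfix : ∀ t : ℝ, Φ C t = C t := by
    intro t
    rw [hΦ C t, hCD]
    exact auxSplit_phi_fixed A₁ A₂ Q C₀ t
  refine ⟨fun t _ => hfix t, ?_⟩
  intro g hg hgfix t ht
  -- difference identity
  have hdiff : ∀ t ∈ Set.Icc (0:ℝ) τ, g t - D t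
      = ∫ s in (0:ℝ)..t, exp ((t - s) • A₁) (A₂ (g s - D s)) := by
    intro u hu
    have h1 : g u = exp (u • A₁) C₀
        + ∫ s in (0:ℝ)..u, exp ((u - s) • A₁) (A₂ (g s) + Q) :=
      (hgfix u hu).symm.trans (hΦ g u)
    have h2 : D u = exp (u • A₁) C₀
        + ∫ s in (0:ℝ)..u, exp ((u - s) • A₁) (A₂ (D s) + Q) :=
      (auxSplit_phi_fixed A₁ A₂ Q C₀ u).symm
    have hce : Continuous fun s : ℝ => exp ((u - s) • A₁) :=
      (auxSplit_cont_exp A₁).comp (continuous_const.sub continuous_id)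
    have hi1 : IntervalIntegrable (fun s => exp ((u - s) • A₁) (A₂ (g s) + Q))
        MeasureTheory.volume 0 u :=
      (auxSplit_cont_apply hce ((A₂.continuous.comp hg).add continuous_const)).intervalIntegrable 0 u
    have hi2 : IntervalIntegrable (fun s => exp ((u - s) • A₁) (A₂ (D s) + Q))
        MeasureTheory.volume 0 u :=
      (auxSplit_cont_apply hce ((A₂.continuous.comp hcontD).add continuous_const)).intervalIntegrable 0 u
    rw [h1, h2, add_sub_add_left_eq_sub, ← intervalIntegral.integral_sub hi1 hi2]
    congr 1
    funext s
    rw [← map_sub, add_sub_add_right_eq_sub, ← map_sub]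
  -- maximum of the difference on [0, τ]
  obtain ⟨t₀, ht₀, hmax⟩ := isCompact_Icc.exists_isMaxOn (Set.nonempty_Icc.2 hτ.le)
    ((hg.sub hcontD).norm.continuousOn (s := Set.Icc 0 τ))
  set M := ‖g t₀ - D t₀‖ with hM
  have hMnn : (0:ℝ) ≤ M := norm_nonneg _
  have hle : ∀ s ∈ Set.Icc (0:ℝ) τ, ‖g s - D s‖ ≤ M := fun s hs => hmax hs
  have hbound : M ≤ (Real.exp (τ * ‖A₁‖) * ‖A₂‖ * M) * τ := by
    have h0 : ‖g t₀ - D t₀‖ ≤ (Real.exp (τ * ‖A₁‖) * ‖A₂‖ * M) * |t₀ - 0| := by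
      rw [hdiff t₀ ht₀]
      refine intervalIntegral.norm_integral_le_of_norm_le_const ?_
      intro s hs
      rw [Set.uIoc_of_le ht₀.1] at hs
      have hs1 : 0 ≤ s := hs.1.le
      have hs2 : s ≤ τ := hs.2.trans ht₀.2
      have hnE : ‖exp ((t₀ - s) • A₁)‖ ≤ Real.exp (τ * ‖A₁‖) := by
        refine (auxSplit_norm_exp_le _).trans ?_
        apply Real.exp_le_exp.2
        refine le_trans (by simpa using ContinuousLinearMap.opNorm_smul_le (t₀ - s) A₁) ?_
        rw [abs_of_nonneg (by linarith [hs.2] : (0:ℝ) ≤ t₀ - s)]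
        have : t₀ - s ≤ τ := by linarith [ht₀.2, hs.1]
        exact mul_le_mul_of_nonneg_right this (norm_nonneg _)
      calc ‖exp ((t₀ - s) • A₁) (A₂ (g s - D s))‖
          ≤ ‖exp ((t₀ - s) • A₁)‖ * ‖A₂ (g s - D s)‖ :=
            ContinuousLinearMap.le_opNorm _ _
        _ ≤ Real.exp (τ * ‖A₁‖) * (‖A₂‖ * M) := by
            refine mul_le_mul hnE ?_ (norm_nonneg _) (Real.exp_nonneg _)
            exact (ContinuousLinearMap.le_opNorm _ _).trans
              (mul_le_mul_of_nonneg_left (hle s ⟨hs1, hs2⟩) (norm_nonneg _))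
        _ = Real.exp (τ * ‖A₁‖) * ‖A₂‖ * M := by ring
    have habs : |t₀ - 0| ≤ τ := by
      rw [sub_zero, abs_of_nonneg ht₀.1]; exact ht₀.2
    refine h0.trans ?_
    have hcnn : (0:ℝ) ≤ Real.exp (τ * ‖A₁‖) * ‖A₂‖ * M := by positivity
    exact mul_le_mul_of_nonneg_left habs hcnn
  have hM0 : M = 0 := by nlinarith [hbound, hk, hMnn]
  have : ‖g t - D t‖ ≤ M := hle t ht
  rw [hM0] at this
  have : g t - D t = 0 := norm_le_zero_iff.1 this
  rw [hCD]
  exact sub_eq_zero.1 this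
end
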